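/- (Kesten direction via convolution operators) Let G be a countable amenable group and m a symmetric probability measure on G (m(g) = m(g⁻¹) for all g). Then the operator norm of the convolution operator P : ℓ²(G) → ℓ²(G), Pf(γ) = ∑_{g∈G} f(γg⁻¹)·m(g), equals 1. -/

import Mathlib

open Filter
open scoped symmDiff
open scoped ENNReal

private lemma tsum_cs {ι : Type*} {a b : ι → ℝ} (ha : ∀ i, 0 ≤ a i) (hb : ∀ i, 0 ≤ b i)
    (hsa : Summable fun i => a i ^ 2) (hsb : Summable fun i => b i ^ 2) :
    (∑' i, a i * b i) ^ 2 ≤ (∑' i, a i ^ 2) * ∑' i, b i ^ 2 := by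
  have hab : Summable fun i => a i * b i := by
    refine Summable.of_nonneg_of_le (fun i => mul_nonneg (ha i) (hb i)) (fun i => ?_)
      ((hsa.add hsb).div_const 2)
    nlinarith [sq_nonneg (a i - b i)]
  have hX : 0 ≤ (∑' i, a i ^ 2) * ∑' i, b i ^ 2 :=
    mul_nonneg (tsum_nonneg fun i => sq_nonneg _) (tsum_nonneg fun i => sq_nonneg _)
  have key : ∀ s : Finset ι, ∑ i ∈ s, a i * b i ≤ Real.sqrt ((∑' i, a i ^ 2) * ∑' i, b i ^ 2) := by
    intro s
    have h1 : (∑ i ∈ s, a i * b i) ^ 2 ≤ (∑' i, a i ^ 2) * ∑' i, b i ^ 2 := by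
      refine (Finset.sum_mul_sq_le_sq_mul_sq s a b).trans ?_
      gcongr
      · exact Summable.sum_le_tsum s (fun i _ => sq_nonneg _) hsa
      · exact Summable.sum_le_tsum s (fun i _ => sq_nonneg _) hsb
    calc ∑ i ∈ s, a i * b i ≤ |∑ i ∈ s, a i * b i| := le_abs_self _
      _ ≤ Real.sqrt ((∑' i, a i ^ 2) * ∑' i, b i ^ 2) := by
          rw [← Real.sqrt_sq_eq_abs]
          exact Real.sqrt_le_sqrt h1
  have h2 : ∑' i, a i * b i ≤ Real.sqrt ((∑' i, a i ^ 2) * ∑' i, b i ^ 2) :=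
    Summable.tsum_le_of_sum_le hab key
  calc (∑' i, a i * b i) ^ 2 ≤ Real.sqrt ((∑' i, a i ^ 2) * ∑' i, b i ^ 2) ^ 2 := by
        apply pow_le_pow_left₀ (tsum_nonneg fun i => mul_nonneg (ha i) (hb i)) h2
    _ = _ := Real.sq_sqrt hX

private lemma rpow_two_toReal (x : ℝ) : x ^ ((2:ℝ≥0∞)).toReal = x ^ 2 := by
  rw [show ((2:ℝ≥0∞)).toReal = ((2:ℕ):ℝ) by norm_num, Real.rpow_natCast]

private lemma lp_norm_sq {G : Type*} (f : lp (fun _ : G => ℂ) 2) :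
    ‖f‖ ^ 2 = ∑' γ, ‖f γ‖ ^ 2 := by
  have := lp.norm_rpow_eq_tsum (p := 2) (by norm_num) f
  rw [← Real.rpow_natCast ‖f‖ 2, show ((2:ℕ):ℝ) = ((2:ℝ≥0∞)).toReal by norm_num, this]
  exact tsum_congr fun γ => rpow_two_toReal _

private lemma lp_summable_sq {G : Type*} (f : lp (fun _ : G => ℂ) 2) :
    Summable fun γ => ‖f γ‖ ^ 2 := by
  have := (lp.memℓp f).summable (p := 2) (by norm_num)
  exact this.congr fun γ => rpow_two_toReal _

private lemma kesten_upper
    {G : Type*} [Group G] [Countable G]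
    (m : G → ℝ) (hm0 : ∀ g, 0 ≤ m g) (hmsum : Summable m) (hm1 : ∑' g, m g = 1)
    (P : lp (fun _ : G => ℂ) 2 →L[ℂ] lp (fun _ : G => ℂ) 2)
    (hP : ∀ (f : lp (fun _ : G => ℂ) 2) (γ : G),
      (P f) γ = ∑' g : G, f (γ * g⁻¹) * (m g : ℂ))
    (f : lp (fun _ : G => ℂ) 2) : ‖P f‖ ≤ ‖f‖ := by
  have hCapp : ∀ γ : G, ‖f γ‖ ≤ ‖f‖ := fun γ =>
    lp.norm_apply_le_norm (by norm_num : (2:ℝ≥0∞) ≠ 0) f γ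
  have htrans : ∀ g : G, Summable fun γ => ‖f (γ * g⁻¹)‖ ^ 2 := by
    intro g
    have h := (Equiv.mulRight g⁻¹).summable_iff.2 (lp_summable_sq f)
    exact h
  have htrans_sum : ∀ g : G, ∑' γ, ‖f (γ * g⁻¹)‖ ^ 2 = ‖f‖ ^ 2 := by
    intro g
    rw [lp_norm_sq f]
    have h := (Equiv.mulRight g⁻¹).tsum_eq (fun δ => ‖f δ‖ ^ 2)
    simpa using h
  have hsum2 : ∀ γ : G, Summable fun g => ‖f (γ * g⁻¹)‖ ^ 2 * m g := by
    intro γ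
    refine Summable.of_nonneg_of_le (fun g => mul_nonneg (sq_nonneg _) (hm0 g)) (fun g => ?_)
      (hmsum.mul_left (‖f‖ ^ 2))
    exact mul_le_mul_of_nonneg_right (pow_le_pow_left₀ (norm_nonneg _) (hCapp _) 2) (hm0 g)
  have hpt : ∀ γ : G, ‖(P f) γ‖ ^ 2 ≤ ∑' g, ‖f (γ * g⁻¹)‖ ^ 2 * m g := by
    intro γ
    have hsum1 : Summable fun g => ‖f (γ * g⁻¹)‖ * m g := by
      refine Summable.of_nonneg_of_le (fun g => mul_nonneg (norm_nonneg _) (hm0 g)) (fun g => ?_)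
        (hmsum.mul_left ‖f‖)
      exact mul_le_mul_of_nonneg_right (hCapp _) (hm0 g)
    have h1 : ‖(P f) γ‖ ≤ ∑' g, ‖f (γ * g⁻¹)‖ * m g := by
      rw [hP]
      refine (norm_tsum_le_tsum_norm ?_).trans_eq (tsum_congr fun g => ?_)
      · exact hsum1.congr fun g => by
          simp [norm_mul, Complex.norm_real, abs_of_nonneg (hm0 g)]
      · simp [norm_mul, Complex.norm_real, abs_of_nonneg (hm0 g)]
    have h2 : (∑' g, ‖f (γ * g⁻¹)‖ * m g) ^ 2 ≤ ∑' g, ‖f (γ * g⁻¹)‖ ^ 2 * m g := by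
      have hcs := tsum_cs (a := fun g => Real.sqrt (m g))
        (b := fun g => ‖f (γ * g⁻¹)‖ * Real.sqrt (m g))
        (fun g => Real.sqrt_nonneg _) (fun g => mul_nonneg (norm_nonneg _) (Real.sqrt_nonneg _))
        (hmsum.congr fun g => (Real.sq_sqrt (hm0 g)).symm)
        ((hsum2 γ).congr fun g => by rw [mul_pow, Real.sq_sqrt (hm0 g)])
      calc (∑' g, ‖f (γ * g⁻¹)‖ * m g) ^ 2
          = (∑' g, Real.sqrt (m g) * (‖f (γ * g⁻¹)‖ * Real.sqrt (m g))) ^ 2 := by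
            congr 1; refine tsum_congr fun g => ?_
            rw [show Real.sqrt (m g) * (‖f (γ * g⁻¹)‖ * Real.sqrt (m g))
              = ‖f (γ * g⁻¹)‖ * (Real.sqrt (m g) * Real.sqrt (m g)) by ring,
              Real.mul_self_sqrt (hm0 g)]
        _ ≤ (∑' g, Real.sqrt (m g) ^ 2) * ∑' g, (‖f (γ * g⁻¹)‖ * Real.sqrt (m g)) ^ 2 := hcs
        _ = ∑' g, ‖f (γ * g⁻¹)‖ ^ 2 * m g := by
            rw [show (∑' g, Real.sqrt (m g) ^ 2) = 1 by
              rw [← hm1]; exact tsum_congr fun g => Real.sq_sqrt (hm0 g), one_mul]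
            exact tsum_congr fun g => by rw [mul_pow, Real.sq_sqrt (hm0 g)]
    calc ‖(P f) γ‖ ^ 2 ≤ (∑' g, ‖f (γ * g⁻¹)‖ * m g) ^ 2 :=
          pow_le_pow_left₀ (norm_nonneg _) h1 2
      _ ≤ _ := h2
  have hinner : ∀ g : G, Summable fun γ => ‖f (γ * g⁻¹)‖ ^ 2 * m g := fun g =>
    (htrans g).mul_right (m g)
  have hprod : Summable fun q : G × G => ‖f (q.2 * q.1⁻¹)‖ ^ 2 * m q.1 := by
    rw [summable_prod_of_nonneg (fun q => mul_nonneg (sq_nonneg _) (hm0 _))]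
    refine ⟨fun g => hinner g, ?_⟩
    refine (hmsum.mul_left (‖f‖ ^ 2)).congr fun g => ?_
    show ‖f‖ ^ 2 * m g = ∑' γ, ‖f (γ * g⁻¹)‖ ^ 2 * m g
    rw [tsum_mul_right, htrans_sum g]
  have houter : Summable fun γ => ∑' g, ‖f (γ * g⁻¹)‖ ^ 2 * m g := by
    have := ((summable_prod_of_nonneg
      (f := fun q : G × G => ‖f (q.1 * q.2⁻¹)‖ ^ 2 * m q.2)
      (fun q => mul_nonneg (sq_nonneg _) (hm0 _))).1 hprod.prod_symm).2
    exact this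
  have hswap : ∑' γ, ∑' g, ‖f (γ * g⁻¹)‖ ^ 2 * m g
      = ∑' g, ∑' γ, ‖f (γ * g⁻¹)‖ ^ 2 * m g :=
    Summable.tsum_comm' hprod (fun g => hinner g) (fun γ => hsum2 γ)
  have final : ‖P f‖ ^ 2 ≤ ‖f‖ ^ 2 := by
    calc ‖P f‖ ^ 2 = ∑' γ, ‖(P f) γ‖ ^ 2 := lp_norm_sq (P f)
      _ ≤ ∑' γ, ∑' g, ‖f (γ * g⁻¹)‖ ^ 2 * m g :=
          Summable.tsum_le_tsum hpt (lp_summable_sq (P f)) houter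
      _ = ∑' g, ∑' γ, ‖f (γ * g⁻¹)‖ ^ 2 * m g := hswap
      _ = ∑' g, ‖f‖ ^ 2 * m g := tsum_congr fun g => by rw [tsum_mul_right, htrans_sum g]
      _ = ‖f‖ ^ 2 := by rw [tsum_mul_left, hm1, mul_one]
  exact le_of_pow_le_pow_left₀ two_ne_zero (norm_nonneg f) final
open scoped symmDiff ENNReal

private lemma mem_inv_image {G : Type*} [Group G] [DecidableEq G] {K : Finset G} {x : G} :
    x ∈ K.image (·⁻¹) ↔ x⁻¹ ∈ K := by
  simp only [Finset.mem_image]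
  exact ⟨fun ⟨a, ha, e⟩ => by rw [← e, inv_inv]; exact ha, fun h => ⟨x⁻¹, h, inv_inv x⟩⟩

private lemma mem_mulright_image {G : Type*} [Group G] [DecidableEq G] {L : Finset G}
    {g x : G} : x ∈ L.image (· * g) ↔ x * g⁻¹ ∈ L := by
  simp only [Finset.mem_image]
  exact ⟨fun ⟨a, ha, e⟩ => by rw [← e, mul_inv_cancel_right]; exact ha,
    fun h => ⟨x * g⁻¹, h, by group⟩⟩

private lemma mem_mulleft_image {G : Type*} [Group G] [DecidableEq G] {K : Finset G}
    {g x : G} : x ∈ K.image (g * ·) ↔ g⁻¹ * x ∈ K := by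
  simp only [Finset.mem_image]
  exact ⟨fun ⟨a, ha, e⟩ => by rw [← e, inv_mul_cancel_left]; exact ha,
    fun h => ⟨g⁻¹ * x, h, by group⟩⟩

private lemma card_LLg {G : Type*} [Group G] [DecidableEq G] (K : Finset G) (g : G) :
    (K.image (·⁻¹) ∩ (K.image (·⁻¹)).image (· * g)).card
      = (K ∩ K.image (g⁻¹ * ·)).card := by
  refine Finset.card_nbij' (fun x => x⁻¹) (fun y => y⁻¹) ?_ ?_ ?_ ?_
  · intro x hx
    simp only [Finset.mem_inter, mem_inv_image, mem_mulright_image, mem_mulleft_image,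
      mul_inv_rev, inv_inv, Finset.coe_inter, Set.mem_inter_iff, Finset.mem_coe] at hx ⊢
    exact hx
  · intro y hy
    simp only [Finset.mem_inter, mem_inv_image, mem_mulright_image, mem_mulleft_image,
      mul_inv_rev, inv_inv, Finset.coe_inter, Set.mem_inter_iff, Finset.mem_coe] at hy ⊢
    exact hy
  · intro x _; exact inv_inv x
  · intro y _; exact inv_inv y

private lemma kesten_lower_n
    {G : Type*} [Group G] [Countable G] [DecidableEq G]
    (m : G → ℝ) (hm0 : ∀ g, 0 ≤ m g) (hmsum : Summable m)
    (P : lp (fun _ : G => ℂ) 2 →L[ℂ] lp (fun _ : G => ℂ) 2)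
    (hP : ∀ (f : lp (fun _ : G => ℂ) 2) (γ : G),
      (P f) γ = ∑' g : G, f (γ * g⁻¹) * (m g : ℂ))
    (Kn : Finset G) :
    ∑' g, m g * (((Kn.image (·⁻¹) ∩ (Kn.image (·⁻¹)).image (· * g)).card : ℕ) : ℝ)
      ≤ ‖P‖ * Kn.card := by
  classical
  set L := Kn.image (·⁻¹) with hLdef
  have hLcard : L.card = Kn.card := Finset.card_image_of_injective _ inv_injective
  set ffun : G → ℂ := fun γ => if γ ∈ L then 1 else 0 with hffun
  have hmem : Memℓp ffun 2 := by
    apply memℓp_gen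
    apply summable_of_ne_finset_zero (s := L)
    intro γ hγ
    have : ffun γ = 0 := by simp [hffun, hγ]
    rw [this]
    simp [Real.zero_rpow, (by norm_num : ((2:ℝ≥0∞)).toReal ≠ 0)]
  set F : lp (fun _ : G => ℂ) 2 := ⟨ffun, hmem⟩ with hFdef
  have happ : ∀ γ, F γ = ffun γ := fun γ => rfl
  have hnormsq : ‖F‖ ^ 2 = (Kn.card : ℝ) := by
    rw [lp_norm_sq F, tsum_eq_sum (s := L) (fun γ hγ => by simp [happ, hffun, hγ]),
      ← hLcard]
    rw [Finset.sum_congr rfl (fun γ hγ => by simp [happ, hffun, hγ] :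
      ∀ γ ∈ L, ‖F γ‖ ^ 2 = 1)]
    simp
  set c : G → ℕ := fun g => (L ∩ L.image (· * g)).card with hc
  have hcle : ∀ g, c g ≤ Kn.card := fun g =>
    (Finset.card_le_card Finset.inter_subset_left).trans_eq hLcard
  have hsumc : Summable fun g => m g * (c g : ℝ) := by
    refine Summable.of_nonneg_of_le (fun g => mul_nonneg (hm0 g) (Nat.cast_nonneg _))
      (fun g => ?_) (hmsum.mul_right (Kn.card : ℝ))
    exact mul_le_mul_of_nonneg_left (by exact_mod_cast hcle g) (hm0 g)
  have hXnonneg : 0 ≤ ∑' g, m g * (c g : ℝ) :=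
    tsum_nonneg fun g => mul_nonneg (hm0 g) (Nat.cast_nonneg _)
  have hsummand : ∀ γ : G, Summable fun g => ffun (γ * g⁻¹) * (m g : ℂ) := by
    intro γ
    apply Summable.of_norm
    refine Summable.of_nonneg_of_le (fun g => norm_nonneg _) (fun g => ?_) hmsum
    rw [norm_mul, Complex.norm_real]
    have h1 : ‖ffun (γ * g⁻¹)‖ ≤ 1 := by
      by_cases h : γ * g⁻¹ ∈ L <;> simp [hffun, h]
    calc ‖ffun (γ * g⁻¹)‖ * ‖m g‖ ≤ 1 * ‖m g‖ :=
          mul_le_mul_of_nonneg_right h1 (norm_nonneg _)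
      _ = m g := by rw [one_mul, Real.norm_eq_abs, abs_of_nonneg (hm0 g)]
  have hsum_eq : ∑ γ ∈ L, (P F) γ = ((∑' g, m g * (c g : ℝ) : ℝ) : ℂ) := by
    have h1 : ∑ γ ∈ L, (P F) γ = ∑ γ ∈ L, ∑' g, ffun (γ * g⁻¹) * (m g : ℂ) :=
      Finset.sum_congr rfl fun γ _ => hP F γ
    have h2 : ∑ γ ∈ L, ∑' g : G, ffun (γ * g⁻¹) * (m g : ℂ)
        = ∑' g : G, ∑ γ ∈ L, ffun (γ * g⁻¹) * (m g : ℂ) :=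
      (Summable.tsum_finsetSum fun γ _ => hsummand γ).symm
    have h3 : ∀ g : G, ∑ γ ∈ L, ffun (γ * g⁻¹) * (m g : ℂ) = ((c g : ℝ) : ℂ) * (m g : ℂ) := by
      intro g
      rw [← Finset.sum_mul]
      congr 1
      have hfilter : L.filter (fun γ => γ * g⁻¹ ∈ L) = L ∩ L.image (· * g) := by
        ext x
        rw [Finset.mem_filter, Finset.mem_inter, mem_mulright_image]
      calc ∑ γ ∈ L, ffun (γ * g⁻¹)
          = ∑ γ ∈ L, if γ * g⁻¹ ∈ L then (1:ℂ) else 0 := rfl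
        _ = ((L.filter (fun γ => γ * g⁻¹ ∈ L)).card : ℂ) := Finset.sum_boole _ _
        _ = ((c g : ℝ) : ℂ) := by rw [hfilter]; push_cast; rfl
    rw [h1, h2, tsum_congr h3, Complex.ofReal_tsum]
    exact tsum_congr fun g => by push_cast; ring
  -- chain of inequalities
  have hA : ‖∑ γ ∈ L, (P F) γ‖ = ∑' g, m g * (c g : ℝ) := by
    rw [hsum_eq, Complex.norm_real, Real.norm_eq_abs, abs_of_nonneg hXnonneg]
  have hB : ∑' g, m g * (c g : ℝ) ≤ ∑ γ ∈ L, ‖(P F) γ‖ := by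
    rw [← hA]; exact norm_sum_le _ _
  have hCS : (∑ γ ∈ L, ‖(P F) γ‖) ^ 2 ≤ (Kn.card : ℝ) * ∑ γ ∈ L, ‖(P F) γ‖ ^ 2 := by
    have := Finset.sum_mul_sq_le_sq_mul_sq L (fun _ => (1:ℝ)) (fun γ => ‖(P F) γ‖)
    simpa [hLcard] using this
  have hD : ∑ γ ∈ L, ‖(P F) γ‖ ^ 2 ≤ ‖P F‖ ^ 2 := by
    rw [lp_norm_sq (P F)]
    exact Summable.sum_le_tsum L (fun γ _ => sq_nonneg _) (lp_summable_sq (P F))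
  have hE : ‖P F‖ ^ 2 ≤ ‖P‖ ^ 2 * (Kn.card : ℝ) := by
    have h1 : ‖P F‖ ≤ ‖P‖ * ‖F‖ := P.le_opNorm F
    have h2 : ‖P F‖ ^ 2 ≤ (‖P‖ * ‖F‖) ^ 2 := pow_le_pow_left₀ (norm_nonneg _) h1 2
    calc ‖P F‖ ^ 2 ≤ (‖P‖ * ‖F‖) ^ 2 := h2
      _ = ‖P‖ ^ 2 * ‖F‖ ^ 2 := by ring
      _ = ‖P‖ ^ 2 * (Kn.card : ℝ) := by rw [hnormsq]
  have hfinal : (∑' g, m g * (c g : ℝ)) ^ 2 ≤ (‖P‖ * (Kn.card : ℝ)) ^ 2 := by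
    calc (∑' g, m g * (c g : ℝ)) ^ 2 ≤ (∑ γ ∈ L, ‖(P F) γ‖) ^ 2 :=
          pow_le_pow_left₀ hXnonneg hB 2
      _ ≤ (Kn.card : ℝ) * ∑ γ ∈ L, ‖(P F) γ‖ ^ 2 := hCS
      _ ≤ (Kn.card : ℝ) * (‖P‖ ^ 2 * (Kn.card : ℝ)) := by
          exact mul_le_mul_of_nonneg_left (hD.trans hE) (Nat.cast_nonneg _)
      _ = (‖P‖ * (Kn.card : ℝ)) ^ 2 := by ring
  exact le_of_pow_le_pow_left₀ two_ne_zero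
    (mul_nonneg (norm_nonneg _) (Nat.cast_nonneg _)) hfinal



/-- Kesten's theorem, amenable direction: for a countable amenable group `G` (amenability
expressed via a Følner sequence) and a symmetric probability measure `m` on `G`, the
right-convolution Markov operator `P f(γ) = ∑_g f(γ g⁻¹) m(g)` on `ℓ²(G)` has operator
norm `1`. -/
theorem kesten_amenable_norm_eq_one
    {G : Type*} [Group G] [Countable G] [DecidableEq G]
    -- Følner sequence: G is amenable
    (K : ℕ → Finset G) (hKne : ∀ n, (K n).Nonempty)
    (hKcover : ∀ g : G, ∃ n, g ∈ K n)
    (hKfolner : ∀ g : G, Tendsto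
      (fun n => ((((K n).image (g * ·)) ∆ K n).card : ℝ) / (K n).card) atTop (nhds 0))
    -- symmetric probability measure m
    (m : G → ℝ) (hm0 : ∀ g, 0 ≤ m g) (hmsum : Summable m) (hm1 : ∑' g, m g = 1)
    (hmsymm : ∀ g : G, m g⁻¹ = m g)
    -- the convolution operator P
    (P : lp (fun _ : G => ℂ) 2 →L[ℂ] lp (fun _ : G => ℂ) 2)
    (hP : ∀ (f : lp (fun _ : G => ℂ) 2) (γ : G),
      (P f) γ = ∑' g : G, f (γ * g⁻¹) * (m g : ℂ)) :
    ‖P‖ = 1 := by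
  classical
  have hupper : ‖P‖ ≤ 1 := by
    refine P.opNorm_le_bound zero_le_one fun f => ?_
    rw [one_mul]
    exact kesten_upper m hm0 hmsum hm1 P hP f
  refine le_antisymm hupper ?_
  -- lower bound
  have hpos : ∀ n, (0:ℝ) < (K n).card := fun n => by
    exact_mod_cast Finset.card_pos.2 (hKne n)
  set c : ℕ → G → ℕ := fun n g =>
    ((K n).image (·⁻¹) ∩ (((K n).image (·⁻¹)).image (· * g))).card with hcdef
  have hc_eq : ∀ n g, c n g = (K n ∩ (K n).image (g⁻¹ * ·)).card := fun n g =>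
    card_LLg (K n) g
  have hcle : ∀ n g, c n g ≤ (K n).card := fun n g => by
    rw [hc_eq]
    exact Finset.card_le_card Finset.inter_subset_left
  -- ratio convergence
  have hratio : ∀ g : G, Tendsto (fun n => ((c n g : ℝ)) / (K n).card) atTop (nhds 1) := by
    intro g
    simp only [hc_eq]
    refine tendsto_of_tendsto_of_tendsto_of_le_of_le
      (g := fun n => 1 - ((((K n).image (g⁻¹ * ·)) ∆ K n).card : ℝ) / (K n).card)
      (h := fun _ => (1:ℝ)) ?_ tendsto_const_nhds ?_ ?_
    · have h2 : Tendsto (fun n => 1 - ((((K n).image (g⁻¹ * ·)) ∆ K n).card : ℝ) / (K n).card)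
          atTop (nhds (1 - 0)) := tendsto_const_nhds.sub (hKfolner g⁻¹)
      simpa using h2
    · intro n
      rw [sub_le_iff_le_add, ← add_div, le_div_iff₀ (hpos n)]
      have hcard : (K n ∩ (K n).image (g⁻¹ * ·)).card
          + (K n \ (K n).image (g⁻¹ * ·)).card = (K n).card :=
        Finset.card_inter_add_card_sdiff _ _
      have hsub : (K n \ (K n).image (g⁻¹ * ·)) ⊆ ((K n).image (g⁻¹ * ·)) ∆ K n := by
        intro x hx
        rw [Finset.mem_symmDiff]
        exact Or.inr ⟨(Finset.mem_sdiff.1 hx).1, (Finset.mem_sdiff.1 hx).2⟩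
      have hle := Finset.card_le_card hsub
      have h1 : ((K n).card : ℝ) = ((K n ∩ (K n).image (g⁻¹ * ·)).card : ℝ)
          + ((K n \ (K n).image (g⁻¹ * ·)).card : ℝ) := by exact_mod_cast hcard.symm
      have h2 : (((K n \ (K n).image (g⁻¹ * ·)).card : ℕ) : ℝ)
          ≤ (((((K n).image (g⁻¹ * ·)) ∆ K n).card : ℕ) : ℝ) := by exact_mod_cast hle
      linarith
    · intro n
      rw [div_le_one (hpos n)]
      exact_mod_cast Finset.card_le_card Finset.inter_subset_left
  -- dominated convergence
  have htend : Tendsto (fun n => ∑' g, m g * ((c n g : ℝ) / (K n).card)) atTop (nhds 1) := by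
    rw [← hm1]
    refine tendsto_tsum_of_dominated_convergence hmsum (fun g => ?_) ?_
    · have := (hratio g).const_mul (m g)
      simpa using this
    · refine Eventually.of_forall fun n => fun g => ?_
      have h1 : 0 ≤ (c n g : ℝ) / (K n).card :=
        div_nonneg (Nat.cast_nonneg _) (le_of_lt (hpos n))
      have h2 : (c n g : ℝ) / (K n).card ≤ 1 := by
        rw [div_le_one (hpos n)]
        exact_mod_cast hcle n g
      rw [Real.norm_eq_abs, abs_of_nonneg (mul_nonneg (hm0 g) h1)]
      calc m g * ((c n g : ℝ) / (K n).card) ≤ m g * 1 :=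
            mul_le_mul_of_nonneg_left h2 (hm0 g)
        _ = m g := mul_one _
  -- each term is ≤ ‖P‖
  have hle : ∀ n, ∑' g, m g * ((c n g : ℝ) / (K n).card) ≤ ‖P‖ := by
    intro n
    have hKbound := kesten_lower_n m hm0 hmsum P hP (K n)
    have heq : ∑' g, m g * ((c n g : ℝ) / (K n).card)
        = (∑' g, m g * (c n g : ℝ)) / (K n).card := by
      rw [← tsum_div_const]
      exact tsum_congr fun g => by ring
    rw [heq, div_le_iff₀ (hpos n)]
    exact hKbound
  exact le_of_tendsto htend (Eventually.of_forall hle)
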